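/- Let F be a field containing a primitive n-th root of unity ω, let F_n be the Fourier matrix with rows e_0, …, e_{n−1}, and let 1 ≤ r ≤ n. Then the code generated by the r×n matrix A whose rows are e_0, e_1, …, e_{r−1} is an [n, r, n−r+1] MDS code: it has dimension r and its minimum distance equals n − r + 1. -/

import Mathlib

open Polynomial Finset

section aux

variable {F : Type*} [Field F] [DecidableEq F] {n r : ℕ}

/-- Number of zeros of a nonzero polynomial of degree < r among distinct nodes is ≤ r-1. -/
lemma aux_card_zeros (hr1 : 1 ≤ r) (hrn : r ≤ n) {ω : F} (hω : IsPrimitiveRoot ω n)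
    {p : F[X]} (hp : p ≠ 0) (hdeg : p.natDegree < r) :
    (Finset.univ.filter (fun k : Fin n => p.eval (ω ^ (k : ℕ)) = 0)).card ≤ r - 1 := by
  set S := Finset.univ.filter (fun k : Fin n => p.eval (ω ^ (k : ℕ)) = 0) with hS
  have hinj : Set.InjOn (fun k : Fin n => ω ^ (k : ℕ)) S := by
    intro a _ b _ hab
    exact Fin.ext (hω.pow_inj a.isLt b.isLt hab)
  have hsub : S.image (fun k : Fin n => ω ^ (k : ℕ)) ⊆ p.roots.toFinset := by
    intro x hx
    simp only [Finset.mem_image] at hx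
    obtain ⟨k, hk, rfl⟩ := hx
    simp only [hS, Finset.mem_filter] at hk
    rw [Multiset.mem_toFinset, Polynomial.mem_roots hp]
    exact hk.2
  calc S.card = (S.image (fun k : Fin n => ω ^ (k : ℕ))).card :=
        (Finset.card_image_of_injOn hinj).symm
    _ ≤ p.roots.toFinset.card := Finset.card_le_card hsub
    _ ≤ Multiset.card p.roots := Multiset.toFinset_card_le _
    _ ≤ p.natDegree := Polynomial.card_roots' p
    _ ≤ r - 1 := by omega

lemma aux_weight (hr1 : 1 ≤ r) (hrn : r ≤ n) {ω : F} (hω : IsPrimitiveRoot ω n)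
    {p : F[X]} (hp : p ≠ 0) (hdeg : p.natDegree < r) :
    n - r + 1 ≤ hammingNorm (fun k : Fin n => p.eval (ω ^ (k : ℕ))) := by
  have h1 := aux_card_zeros hr1 hrn hω hp hdeg
  have h2 := Finset.card_filter_add_card_filter_not
    (s := (Finset.univ : Finset (Fin n))) (fun k : Fin n => p.eval (ω ^ (k : ℕ)) = 0)
  simp only [Finset.card_univ, Fintype.card_fin] at h2
  show n - r + 1 ≤ (Finset.univ.filter (fun k : Fin n => p.eval (ω ^ (k : ℕ)) ≠ 0)).card
  have h3 : (Finset.univ.filter (fun k : Fin n => p.eval (ω ^ (k : ℕ)) ≠ 0)).card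
      = (Finset.univ.filter (fun k : Fin n => ¬ p.eval (ω ^ (k : ℕ)) = 0)).card := by
    congr 1
  omega

end aux

/-- Let `ω` be a primitive `n`-th root of unity in `F` and let `A` be the `r × n`
matrix whose rows are the first `r` rows `e_0, …, e_{r-1}` of the Fourier matrix
(`e_i = (1, ω^i, ω^(2i), …)`). Then the code generated by `A` is an
`[n, r, n - r + 1]` MDS code: it has dimension `r` and minimum distance
`n - r + 1`. -/
theorem stmt_9 {F : Type*} [Field F] [DecidableEq F] {n r : ℕ}
    (hr1 : 1 ≤ r) (hrn : r ≤ n) (ω : F) (hω : IsPrimitiveRoot ω n)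
    (A : Matrix (Fin r) (Fin n) F)
    (hA : ∀ (i : Fin r) (k : Fin n), A i k = ω ^ ((i : ℕ) * (k : ℕ))) :
    Module.finrank F (Submodule.span F (Set.range A)) = r ∧
    (∀ c ∈ Submodule.span F (Set.range A), c ≠ 0 → n - r + 1 ≤ hammingNorm c) ∧
    (∃ c ∈ Submodule.span F (Set.range A), c ≠ 0 ∧ hammingNorm c = n - r + 1) := by
  have hn : 0 < n := lt_of_lt_of_le hr1 hrn
  set L := (Fintype.linearCombination F) A with hL
  have hrange : LinearMap.range L = Submodule.span F (Set.range A) :=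
    Fintype.range_linearCombination F A
  -- the polynomial associated to a coefficient vector
  set P : (Fin r → F) → F[X] := fun f => ∑ i : Fin r, C (f i) * X ^ (i : ℕ) with hP
  have hPdeg : ∀ f, (P f).natDegree < r := by
    intro f
    by_cases h0 : P f = 0
    · rw [h0]; simpa using Nat.lt_of_lt_of_le Nat.zero_lt_one hr1
    have hd : (P f).degree < (r : ℕ) := by
      apply lt_of_le_of_lt (Polynomial.degree_sum_le _ _)
      rw [Finset.sup_lt_iff (by exact_mod_cast WithBot.bot_lt_coe r)]
      intro i _
      calc (C (f i) * X ^ (i : ℕ)).degree ≤ (((i : ℕ) : WithBot ℕ)) :=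
            Polynomial.degree_C_mul_X_pow_le _ _
        _ < ((r : ℕ) : WithBot ℕ) := by exact_mod_cast i.isLt
    exact (Polynomial.natDegree_lt_iff_degree_lt h0).mpr hd
  have hPcoeff : ∀ f (i : Fin r), (P f).coeff (i : ℕ) = f i := by
    intro f i
    rw [hP]
    simp only [Polynomial.finset_sum_coeff, Polynomial.coeff_C_mul, Polynomial.coeff_X_pow]
    rw [Finset.sum_eq_single i]
    · simp
    · intro b _ hb
      have h1 : ¬ ((i : ℕ) = (b : ℕ)) := fun h => hb (Fin.ext h.symm)
      simp [h1]
    · simp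
  have hPeval : ∀ f (k : Fin n), (P f).eval (ω ^ (k : ℕ)) = L f k := by
    intro f k
    rw [hP, hL]
    change _ = (∑ i, f i • A i) k
    simp only [Fintype.linearCombination_apply, Polynomial.eval_finset_sum,
      Polynomial.eval_mul, Polynomial.eval_C, Polynomial.eval_pow, Polynomial.eval_X,
      Finset.sum_apply, Pi.smul_apply, smul_eq_mul, hA]
    congr 1
    ext i
    rw [← pow_mul, Nat.mul_comm]
  have hLeval : ∀ f, L f = fun k : Fin n => (P f).eval (ω ^ (k : ℕ)) := by
    intro f; ext k; rw [hPeval]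
  -- injectivity of L
  have hLinj : Function.Injective L := by
    rw [injective_iff_map_eq_zero]
    intro f hf
    have hP0 : P f = 0 := by
      by_contra hne
      have hle := aux_card_zeros hr1 hrn hω hne (hPdeg f)
      have hall : (Finset.univ.filter (fun k : Fin n => (P f).eval (ω ^ (k : ℕ)) = 0)) =
          Finset.univ := by
        apply Finset.filter_true_of_mem
        intro k _
        rw [hPeval, hf]; rfl
      rw [hall, Finset.card_univ, Fintype.card_fin] at hle
      omega
    funext i
    rw [← hPcoeff f i, hP0, Polynomial.coeff_zero]
    rfl
  refine ⟨?_, ?_, ?_⟩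
  · rw [← hrange, LinearMap.finrank_range_of_inj hLinj]
    simp
  · intro c hc hc0
    rw [← hrange, LinearMap.mem_range] at hc
    obtain ⟨f, rfl⟩ := hc
    have hpne : P f ≠ 0 := by
      intro h
      apply hc0
      rw [hLeval f, h]
      funext k; simp
    rw [hLeval f]
    exact aux_weight hr1 hrn hω hpne (hPdeg f)
  · -- explicit codeword of weight n - r + 1
    set p : F[X] := ∏ j ∈ Finset.range (r - 1), (X - C (ω ^ j)) with hp
    have hpmonic : p.Monic := monic_prod_of_monic _ _ (fun j _ => monic_X_sub_C _)
    have hpdeg : p.natDegree = r - 1 := by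
      rw [hp, Polynomial.natDegree_prod_of_monic _ _ (fun j _ => monic_X_sub_C _)]
      simp only [Polynomial.natDegree_X_sub_C, Finset.sum_const, smul_eq_mul, mul_one,
        Finset.card_range]
    set f : Fin r → F := fun i => p.coeff (i : ℕ) with hf
    have hPf : P f = p := by
      ext j
      rcases lt_or_ge j r with hj | hj
      · rw [hPcoeff f ⟨j, hj⟩]
      · rw [Polynomial.coeff_eq_zero_of_natDegree_lt (lt_of_lt_of_le (hPdeg f) hj),
          Polynomial.coeff_eq_zero_of_natDegree_lt (by omega)]
    have hevalzero : ∀ k : Fin n, p.eval (ω ^ (k : ℕ)) = 0 ↔ (k : ℕ) < r - 1 := by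
      intro k
      rw [hp]
      simp only [Polynomial.eval_prod, Polynomial.eval_sub, Polynomial.eval_X,
        Polynomial.eval_C, Finset.prod_eq_zero_iff]
      constructor
      · rintro ⟨j, hj, hj0⟩
        rw [Finset.mem_range] at hj
        have heq : ω ^ (k : ℕ) = ω ^ j := by linear_combination hj0
        have := hω.pow_inj k.isLt (by omega) heq
        omega
      · intro hk
        exact ⟨(k : ℕ), Finset.mem_range.mpr hk, by ring⟩
    refine ⟨L f, ?_, ?_, ?_⟩
    · rw [← hrange]; exact LinearMap.mem_range_self _ _
    · intro h
      have hk : (r - 1 : ℕ) < n := by omega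
      have hc := congrFun h (⟨r - 1, hk⟩ : Fin n)
      rw [← hPeval, hPf] at hc
      simp only [Pi.zero_apply] at hc
      have hlt := (hevalzero ⟨r - 1, hk⟩).mp hc
      simp only [Fin.val_mk] at hlt
      omega
    · rw [hLeval f, hPf]
      show (Finset.univ.filter (fun k : Fin n => p.eval (ω ^ (k : ℕ)) ≠ 0)).card = n - r + 1
      have h2 := Finset.card_filter_add_card_filter_not
        (s := (Finset.univ : Finset (Fin n))) (fun k : Fin n => p.eval (ω ^ (k : ℕ)) = 0)
      simp only [Finset.card_univ, Fintype.card_fin] at h2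
      have hk : (r - 1 : ℕ) < n := by omega
      have hzc : (Finset.filter (fun k : Fin n => p.eval (ω ^ (k:ℕ)) = 0) Finset.univ).card
          = r - 1 := by
        have heq : (Finset.filter (fun k : Fin n => p.eval (ω ^ (k:ℕ)) = 0) Finset.univ) =
            Finset.Iio (⟨r - 1, hk⟩ : Fin n) := by
          ext k
          simp [hevalzero k, Fin.lt_def]
        rw [heq, Fin.card_Iio]
      have h3 : (Finset.univ.filter (fun k : Fin n => p.eval (ω ^ (k : ℕ)) ≠ 0)).card
          = (Finset.univ.filter (fun k : Fin n => ¬ p.eval (ω ^ (k : ℕ)) = 0)).card := by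
        congr 1
      omega
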